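/- With notation as in the spatial regression loss, the map (β, R) ↦ ‖y − wR − sβ‖² is K-Lipschitz for the metric D((β,R),(β',R')) = √Q K_neighb K_Y ‖R − R'‖ + exp(K_X) ‖β − β'‖, where K = 2[K_Y + K_neighb K_Y Q^{3/2} + exp(K_X) α]; i.e., |‖y − wR − sβ‖² − ‖y − wR' − sβ'‖²| ≤ K·D((β,R),(β',R')). -/

import Mathlib

open Matrix

/-- Euclidean norm of a vector in `ℝ^k`. -/
noncomputable def eucNorm {k : ℕ} (v : Fin k → ℝ) : ℝ := Real.sqrt (∑ i, v i ^ 2)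

/-- Frobenius norm of a real matrix. -/
noncomputable def frobNorm {k l : ℕ} (M : Matrix (Fin k) (Fin l) ℝ) : ℝ :=
  Real.sqrt (∑ i, ∑ j, M i j ^ 2)

lemma eucNorm_eq {k : ℕ} (v : Fin k → ℝ) :
    eucNorm v = ‖(WithLp.equiv 2 (Fin k → ℝ)).symm v‖ := by
  rw [EuclideanSpace.norm_eq]
  simp [eucNorm, sq_abs]

lemma eucNorm_nonneg {k : ℕ} (v : Fin k → ℝ) : 0 ≤ eucNorm v := Real.sqrt_nonneg _

lemma frobNorm_nonneg {k l : ℕ} (M : Matrix (Fin k) (Fin l) ℝ) : 0 ≤ frobNorm M :=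
  Real.sqrt_nonneg _

lemma eucNorm_add_le {k : ℕ} (a b : Fin k → ℝ) :
    eucNorm (fun i => a i + b i) ≤ eucNorm a + eucNorm b := by
  rw [eucNorm_eq, eucNorm_eq, eucNorm_eq]
  exact norm_add_le _ _

lemma abs_eucNorm_sub {k : ℕ} (a b : Fin k → ℝ) :
    |eucNorm a - eucNorm b| ≤ eucNorm (fun i => a i - b i) := by
  rw [eucNorm_eq a, eucNorm_eq b, eucNorm_eq]
  exact abs_norm_sub_norm_le _ _

lemma eucNorm_vecMul_le {p q : ℕ} (s : Fin p → ℝ) (M : Matrix (Fin p) (Fin q) ℝ) :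
    eucNorm (s ᵥ* M) ≤ eucNorm s * frobNorm M := by
  rw [eucNorm, eucNorm, frobNorm,
    ← Real.sqrt_mul (Finset.sum_nonneg fun i _ => sq_nonneg _)]
  apply Real.sqrt_le_sqrt
  rw [Finset.sum_comm, Finset.mul_sum]
  apply Finset.sum_le_sum
  intro j _
  have h := Finset.sum_mul_sq_le_sq_mul_sq Finset.univ s (fun i => M i j)
  simpa [Matrix.vecMul, dotProduct] using h

lemma frobNorm_le_of_entries {q : ℕ} (M : Matrix (Fin q) (Fin q) ℝ)
    (h : ∀ i j, M i j ∈ Set.Icc (-1 : ℝ) 1) : frobNorm M ≤ q := by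
  have hsum : ∑ i, ∑ j, M i j ^ 2 ≤ (q : ℝ) * q := by
    calc ∑ i : Fin q, ∑ j, M i j ^ 2 ≤ ∑ i : Fin q, ∑ j : Fin q, (1 : ℝ) := by
          apply Finset.sum_le_sum; intro i _
          apply Finset.sum_le_sum; intro j _
          have := h i j
          have : |M i j| ≤ 1 := abs_le.2 ⟨this.1, this.2⟩
          calc M i j ^ 2 = |M i j| ^ 2 := (sq_abs _).symm
            _ ≤ 1 ^ 2 := by gcongr
            _ = 1 := one_pow 2
      _ = (q : ℝ) * q := by simp [mul_comm]
  calc frobNorm M ≤ Real.sqrt ((q : ℝ) * q) := Real.sqrt_le_sqrt hsum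
    _ = q := by rw [Real.sqrt_mul_self (Nat.cast_nonneg q)]

lemma frobNorm_sub_comm {k l : ℕ} (A B : Matrix (Fin k) (Fin l) ℝ) :
    frobNorm (A - B) = frobNorm (B - A) := by
  unfold frobNorm
  congr 1
  apply Finset.sum_congr rfl; intro i _
  apply Finset.sum_congr rfl; intro j _
  simp [Matrix.sub_apply]
  ring

lemma rpow_three_halves (Q : ℕ) : (Q : ℝ) ^ ((3 : ℝ) / 2) = Q * Real.sqrt Q := by
  rcases Nat.eq_zero_or_pos Q with h | h
  · subst h; simp [Real.zero_rpow]
  · have hQ : (0 : ℝ) < Q := by exact_mod_cast h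
    rw [show (3 : ℝ) / 2 = 1 + 1 / 2 by norm_num, Real.rpow_add hQ, Real.rpow_one,
      ← Real.sqrt_eq_rpow]

/-- The map `(β, R) ↦ ‖y − wR − sβ‖²` is `K`-Lipschitz for the metric
`D((β,R),(β',R')) = √Q K_neighb K_Y ‖R − R'‖ + exp(K_X) ‖β − β'‖`, with
`K = 2[K_Y + K_neighb K_Y Q^{3/2} + exp(K_X) α]`. -/
theorem stmt_12 {Q p : ℕ} (y w : Fin Q → ℝ) (s : Fin p → ℝ)
    (β β' : Matrix (Fin p) (Fin Q) ℝ) (R R' : Matrix (Fin Q) (Fin Q) ℝ)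
    (K_Y K_neighb K_X α : ℝ)
    (hKY : 0 < K_Y) (hKn : 0 < K_neighb) (hα : 0 < α)
    (hy : eucNorm y ≤ K_Y)
    (hw : eucNorm w ≤ Real.sqrt Q * K_neighb * K_Y)
    (hs : eucNorm s ≤ Real.exp K_X)
    (hβ : frobNorm β ≤ α) (hβ' : frobNorm β' ≤ α)
    (hR : ∀ q q', R q q' ∈ Set.Icc (-1 : ℝ) 1)
    (hR' : ∀ q q', R' q q' ∈ Set.Icc (-1 : ℝ) 1) :
    |eucNorm (fun j => y j - (w ᵥ* R) j - (s ᵥ* β) j) ^ 2 -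
        eucNorm (fun j => y j - (w ᵥ* R') j - (s ᵥ* β') j) ^ 2| ≤
      (2 * (K_Y + K_neighb * K_Y * (Q : ℝ) ^ ((3 : ℝ) / 2) + Real.exp K_X * α)) *
        (Real.sqrt Q * K_neighb * K_Y * frobNorm (R - R') +
          Real.exp K_X * frobNorm (β - β')) := by
  set u : Fin Q → ℝ := fun j => y j - (w ᵥ* R) j - (s ᵥ* β) j with hu
  set u' : Fin Q → ℝ := fun j => y j - (w ᵥ* R') j - (s ᵥ* β') j with hu'
  set a := eucNorm u with ha
  set b := eucNorm u' with hb
  have ha0 : 0 ≤ a := eucNorm_nonneg _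
  have hb0 : 0 ≤ b := eucNorm_nonneg _
  set D := Real.sqrt Q * K_neighb * K_Y * frobNorm (R - R') +
      Real.exp K_X * frobNorm (β - β') with hD
  set K := 2 * (K_Y + K_neighb * K_Y * (Q : ℝ) ^ ((3 : ℝ) / 2) + Real.exp K_X * α) with hK
  -- bound on the difference of norms
  have hw0 : 0 ≤ Real.sqrt Q * K_neighb * K_Y := by positivity
  have hdiff : |a - b| ≤ D := by
    have h1 : |b - a| ≤ eucNorm (fun j => u' j - u j) := abs_eucNorm_sub u' u
    have h2 : (fun j => u' j - u j) =
        fun j => (w ᵥ* (R - R')) j + (s ᵥ* (β - β')) j := by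
      funext j
      simp only [hu, hu', Matrix.vecMul, dotProduct, Matrix.sub_apply,
        mul_sub, Finset.sum_sub_distrib]
      ring
    have h3 : eucNorm (fun j => u' j - u j) ≤
        eucNorm (w ᵥ* (R - R')) + eucNorm (s ᵥ* (β - β')) := by
      rw [h2]; exact eucNorm_add_le _ _
    have h4 : eucNorm (w ᵥ* (R - R')) ≤ Real.sqrt Q * K_neighb * K_Y * frobNorm (R - R') :=
      le_trans (eucNorm_vecMul_le w (R - R'))
        (mul_le_mul_of_nonneg_right hw (frobNorm_nonneg _) |>.trans_eq rfl)
    have h5 : eucNorm (s ᵥ* (β - β')) ≤ Real.exp K_X * frobNorm (β - β') :=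
      le_trans (eucNorm_vecMul_le s (β - β'))
        (mul_le_mul_of_nonneg_right hs (frobNorm_nonneg _))
    calc |a - b| = |b - a| := abs_sub_comm a b
      _ ≤ eucNorm (fun j => u' j - u j) := h1
      _ ≤ _ := h3
      _ ≤ D := by rw [hD]; exact add_le_add h4 h5
  -- bound on a and b
  have hbound : ∀ (β₀ : Matrix (Fin p) (Fin Q) ℝ) (R₀ : Matrix (Fin Q) (Fin Q) ℝ),
      frobNorm β₀ ≤ α → (∀ q q', R₀ q q' ∈ Set.Icc (-1 : ℝ) 1) →
      eucNorm (fun j => y j - (w ᵥ* R₀) j - (s ᵥ* β₀) j) ≤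
        K_Y + K_neighb * K_Y * (Q : ℝ) ^ ((3 : ℝ) / 2) + Real.exp K_X * α := by
    intro β₀ R₀ hβ₀ hR₀
    have heq : (fun j => y j - (w ᵥ* R₀) j - (s ᵥ* β₀) j) =
        fun j => (fun j => y j + -(w ᵥ* R₀) j) j + (-(s ᵥ* β₀)) j := by
      funext j; simp; ring
    have t1 : eucNorm (fun j => y j + -(w ᵥ* R₀) j) ≤ eucNorm y + eucNorm (-(w ᵥ* R₀)) :=
      eucNorm_add_le y (-(w ᵥ* R₀))
    have hneg : ∀ (v : Fin Q → ℝ), eucNorm (-v) = eucNorm v := by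
      intro v; unfold eucNorm; congr 1; apply Finset.sum_congr rfl; intro i _; simp
    have t2 : eucNorm (w ᵥ* R₀) ≤ eucNorm w * frobNorm R₀ := eucNorm_vecMul_le w R₀
    have t3 : eucNorm (s ᵥ* β₀) ≤ eucNorm s * frobNorm β₀ := eucNorm_vecMul_le s β₀
    have hfr : frobNorm R₀ ≤ Q := frobNorm_le_of_entries R₀ hR₀
    have hwR : eucNorm (w ᵥ* R₀) ≤ K_neighb * K_Y * (Q : ℝ) ^ ((3 : ℝ) / 2) := by
      calc eucNorm (w ᵥ* R₀) ≤ eucNorm w * frobNorm R₀ := t2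
        _ ≤ (Real.sqrt Q * K_neighb * K_Y) * Q := by
            apply mul_le_mul hw hfr (frobNorm_nonneg _) hw0
        _ = K_neighb * K_Y * (Q : ℝ) ^ ((3 : ℝ) / 2) := by
            rw [rpow_three_halves]; ring
    have hsβ : eucNorm (s ᵥ* β₀) ≤ Real.exp K_X * α := by
      calc eucNorm (s ᵥ* β₀) ≤ eucNorm s * frobNorm β₀ := t3
        _ ≤ Real.exp K_X * α := by
            apply mul_le_mul hs hβ₀ (frobNorm_nonneg _) (Real.exp_pos _).le
    calc eucNorm (fun j => y j - (w ᵥ* R₀) j - (s ᵥ* β₀) j)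
        ≤ eucNorm (fun j => y j + -(w ᵥ* R₀) j) + eucNorm (-(s ᵥ* β₀)) := by
          rw [heq]; exact eucNorm_add_le _ _
      _ ≤ eucNorm y + eucNorm (-(w ᵥ* R₀)) + eucNorm (-(s ᵥ* β₀)) := by
          exact add_le_add_left t1 _
      _ = eucNorm y + eucNorm (w ᵥ* R₀) + eucNorm (s ᵥ* β₀) := by rw [hneg, hneg]
      _ ≤ K_Y + K_neighb * K_Y * (Q : ℝ) ^ ((3 : ℝ) / 2) + Real.exp K_X * α := by
          exact add_le_add (add_le_add hy hwR) hsβ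
  have haK : a + b ≤ K := by
    rw [hK]
    have h1 := hbound β R hβ hR
    have h2 := hbound β' R' hβ' hR'
    rw [ha, hb, hu, hu']
    linarith
  have hD0 : 0 ≤ D := by
    rw [hD]
    have := frobNorm_nonneg (R - R')
    have := frobNorm_nonneg (β - β')
    positivity
  calc |a ^ 2 - b ^ 2| = (a + b) * |a - b| := by
        rw [show a ^ 2 - b ^ 2 = (a + b) * (a - b) by ring, abs_mul,
          abs_of_nonneg (by linarith : (0:ℝ) ≤ a + b)]
    _ ≤ K * D := by
        apply mul_le_mul haK hdiff (abs_nonneg _)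
        have : 0 ≤ a + b := by linarith
        linarith [mul_nonneg this (abs_nonneg (a - b))]
  -- done
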